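/- For (a,b,c) ∈ k³ \ {(0,0,0)}, the left Λ-module M(a,b,c) satisfies Ext¹_Λ(M(a,b,c), Λ) = 0 if and only if a ≠ 0 and a + b ≠ 0. -/

import Mathlib

open CategoryTheory Limits Opposite

/-- The algebra `Λ = Λ(q)` of Ringel–Zhang: a `k`-algebra with distinguished elements
`x, y, z` satisfying the defining relations
`x² = y² = z² = 0`, `yz = 0`, `xy + q·yx = 0`, `xz = zx`, `zy = zx`,
and admitting the `k`-basis `{1, x, y, z, yx, zx}`.
Any such algebra is canonically isomorphic to the quotient of the free algebra
`k⟨x,y,z⟩` by the two-sided ideal generated by these relations. -/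
structure LambdaAlg (k : Type) [Field k] (q : k) (Λ : Type) [Ring Λ] [Algebra k Λ] :
    Type where
  x : Λ
  y : Λ
  z : Λ
  hxx : x * x = 0
  hyy : y * y = 0
  hzz : z * z = 0
  hyz : y * z = 0
  hxy : x * y + q • (y * x) = 0
  hxz : x * z - z * x = 0
  hzy : z * y - z * x = 0
  basis : Module.Basis (Fin 6) k Λ
  hb0 : basis 0 = 1
  hb1 : basis 1 = x
  hb2 : basis 2 = y
  hb3 : basis 3 = z
  hb4 : basis 4 = y * x
  hb5 : basis 5 = z * x

namespace LambdaAlg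

variable {k : Type} [Field k] {q : k} {Λ : Type} [Ring Λ] [Algebra k Λ]

/-- The element `ax + by + cz` of `Λ`. -/
def w (D : LambdaAlg k q Λ) (a b c : k) : Λ := a • D.x + b • D.y + c • D.z

/-- The left ideal `U(a,b,c) = Λ(ax+by+cz) + Λ·yx + Λ·zx` of `Λ`. -/
def U (D : LambdaAlg k q Λ) (a b c : k) : Submodule Λ Λ :=
  Submodule.span Λ {D.w a b c, D.y * D.x, D.z * D.x}

/-- The left `Λ`-module `M(a,b,c) = Λ/U(a,b,c)`. -/
abbrev M (D : LambdaAlg k q Λ) (a b c : k) : Type := Λ ⧸ D.U a b c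

/-- The right ideal `U′(a,b,c) = (ax+by+cz)Λ + yx·Λ + zx·Λ` of `Λ`,
viewed as a `Λᵐᵒᵖ`-submodule of `Λ`. -/
def U' (D : LambdaAlg k q Λ) (a b c : k) : Submodule Λᵐᵒᵖ Λ :=
  Submodule.span Λᵐᵒᵖ {D.w a b c, D.y * D.x, D.z * D.x}

/-- The right `Λ`-module `M′(a,b,c) = Λ/U′(a,b,c)` (a module over `Λᵐᵒᵖ`). -/
abbrev M' (D : LambdaAlg k q Λ) (a b c : k) : Type := Λ ⧸ D.U' a b c

/-- The `k`-subspace `{m ∈ M : x·m = y·m = z·m = 0}` of a left `Λ`-module `M`;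
since `x, y, z` generate `rad Λ` and every simple `Λ`-module is isomorphic to `k`,
this is the socle of `M`. -/
def ann (D : LambdaAlg k q Λ) (M : Type) [AddCommGroup M] [Module k M] [Module Λ M]
    [IsScalarTower k Λ M] : Submodule k M where
  carrier := {m | D.x • m = 0 ∧ D.y • m = 0 ∧ D.z • m = 0}
  add_mem' := by
    rintro a b ⟨h1, h2, h3⟩ ⟨g1, g2, g3⟩
    simp [smul_add, h1, h2, h3, g1, g2, g3]
  zero_mem' := by simp
  smul_mem' := by
    rintro a m ⟨h1, h2, h3⟩
    refine ⟨?_, ?_, ?_⟩ <;> rw [smul_comm] <;> simp [h1, h2, h3]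

/-- The submodule `(rad Λ)·M = x·M + y·M + z·M` of a left `Λ`-module `M`. -/
def radM (D : LambdaAlg k q Λ) (M : Type) [AddCommGroup M] [Module Λ M] :
    Submodule Λ M :=
  Submodule.span Λ
    (Set.range (fun m : M => D.x • m) ∪ Set.range (fun m : M => D.y • m) ∪
      Set.range (fun m : M => D.z • m))

end LambdaAlg

set_option linter.unreachableTactic false
set_option linter.unusedTactic false

noncomputable section GenericResolution

variable {R : Type} [Ring R]

/-- The tower of syzygies: starting from `(R, K₀)`, each step is the free module on the
previous kernel, with the kernel of the total map. -/
noncomputable def resAux (K0 : Submodule R R) : ℕ → Σ (V : ModuleCat R), Submodule R V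
  | 0 => ⟨ModuleCat.of R R, K0⟩
  | n + 1 =>
    ⟨ModuleCat.of R ((resAux K0 n).2 →₀ R),
      LinearMap.ker (Finsupp.linearCombination R (Subtype.val : (resAux K0 n).2 → (resAux K0 n).1))⟩

noncomputable def resD (K0 : Submodule R R) (n : ℕ) :
    (resAux K0 (n + 1)).1 ⟶ (resAux K0 n).1 :=
  ModuleCat.ofHom (Finsupp.linearCombination R (Subtype.val : (resAux K0 n).2 → (resAux K0 n).1))

lemma resD_range (K0 : Submodule R R) (n : ℕ) :
    LinearMap.range (resD K0 n).hom = (resAux K0 n).2 := by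
  show LinearMap.range (Finsupp.linearCombination R (Subtype.val : (resAux K0 n).2 → (resAux K0 n).1)) = _
  rw [Finsupp.range_linearCombination, Subtype.range_val, Submodule.span_eq]

lemma resD_ker (K0 : Submodule R R) (n : ℕ) :
    LinearMap.ker (resD K0 n).hom = (resAux K0 (n + 1)).2 := rfl

noncomputable def resComplex (K0 : Submodule R R) : ChainComplex (ModuleCat R) ℕ :=
  ChainComplex.of (fun n => (resAux K0 n).1) (resD K0) (by
    intro n
    apply ModuleCat.hom_ext
    apply LinearMap.ext
    intro v
    have hv : (resD K0 (n + 1)).hom v ∈ LinearMap.ker (resD K0 n).hom := by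
      rw [resD_ker]
      rw [← resD_range K0 (n+1)]
      exact LinearMap.mem_range_self _ v
    exact hv)

end GenericResolution

noncomputable section GenericResolution2

variable {R : Type} [Ring R] (K0 : Submodule R R)

lemma resComplex_projective (n : ℕ) : Projective ((resComplex K0).X n) := by
  cases n with
  | zero => exact ModuleCat.projective_of_free.{0,0,0} (Module.Basis.singleton (Fin 1) R)
  | succ n => exact ModuleCat.projective_of_free.{0,0,0} Finsupp.basisSingleOne

/-- The augmentation map to `R ⧸ K0`. -/
noncomputable def resPi : (resComplex K0) ⟶ (ChainComplex.single₀ (ModuleCat R)).obj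
    (ModuleCat.of R (R ⧸ K0)) :=
  (ChainComplex.toSingle₀Equiv _ _).symm
    ⟨(ModuleCat.ofHom K0.mkQ : ModuleCat.of R R ⟶ ModuleCat.of R (R ⧸ K0)), by
      apply ModuleCat.hom_ext
      apply LinearMap.ext
      intro v
      have h0 : (resComplex K0).d 1 0 = resD K0 0 := ChainComplex.of_d (fun n => (resAux K0 n).1) (resD K0) 0
      have h1 : (resD K0 0).hom v ∈ LinearMap.range (resD K0 0).hom := LinearMap.mem_range_self _ v
      rw [resD_range] at h1
      show K0.mkQ (((resComplex K0).d 1 0).hom v) = 0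
      rw [h0]
      exact (Submodule.Quotient.mk_eq_zero K0).2 h1⟩

lemma resComplex_exactAt_succ (n : ℕ) : (resComplex K0).ExactAt (n + 1) := by
  rw [HomologicalComplex.exactAt_iff' _ (n + 2) (n + 1) n (by simp) (by simp)]
  rw [ShortComplex.moduleCat_exact_iff]
  intro v hv
  have hd1 : (resComplex K0).d (n + 2) (n + 1) = resD K0 (n + 1) := ChainComplex.of_d (fun n => (resAux K0 n).1) (resD K0) (n + 1)
  have hd0 : (resComplex K0).d (n + 1) n = resD K0 n := ChainComplex.of_d (fun n => (resAux K0 n).1) (resD K0) (n)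
  have : v ∈ LinearMap.range (resD K0 (n + 1)).hom := by
    rw [resD_range]
    rw [← resD_ker]
    exact (congrArg (fun f : (resComplex K0).X (n + 1) ⟶ (resComplex K0).X n => f.hom v) hd0).symm.trans hv
  obtain ⟨w, hw⟩ := this
  exact ⟨w, (congrArg (fun f : (resComplex K0).X (n + 2) ⟶ (resComplex K0).X (n + 1) => f.hom w) hd1).trans hw⟩

instance : QuasiIso (resPi K0) := by
  constructor
  intro n
  cases n with
  | zero =>
    rw [quasiIsoAt_iff' _ 1 0 0 (by simp) (by simp)]
    apply (ShortComplex.quasiIso_iff_of_zeros' _ (HomologicalComplex.shape (resComplex K0) 0 0 (by simp))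
      rfl rfl).2
    constructor
    · rw [ShortComplex.moduleCat_exact_iff]
      intro v hv
      dsimp at hv ⊢
      have hpi0 : (resPi K0).f 0 = (ModuleCat.ofHom K0.mkQ : ModuleCat.of R R ⟶ ModuleCat.of R (R ⧸ K0)) :=
        ChainComplex.toSingle₀Equiv_symm_apply_f_zero _ _
      have hv' : v ∈ LinearMap.range (resD K0 0).hom := by
        rw [resD_range]
        have hv2 : ((resPi K0).f 0).hom v = 0 := hv
        rw [hpi0] at hv2
        show v ∈ K0
        exact (Submodule.Quotient.mk_eq_zero K0).1 hv2
      obtain ⟨w, hw⟩ := hv'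
      have hd : (resComplex K0).d 1 0 = resD K0 0 := ChainComplex.of_d (fun n => (resAux K0 n).1) (resD K0) (0)
      exact ⟨w, (congrArg (fun f : (resComplex K0).X 1 ⟶ (resComplex K0).X 0 => f.hom w) hd).trans hw⟩
    · have hpi0 : (resPi K0).f 0 = (ModuleCat.ofHom K0.mkQ : ModuleCat.of R R ⟶ ModuleCat.of R (R ⧸ K0)) :=
        ChainComplex.toSingle₀Equiv_symm_apply_f_zero _ _
      show Epi ((resPi K0).f 0)
      rw [hpi0]
      show Epi (ModuleCat.ofHom K0.mkQ : ModuleCat.of R R ⟶ ModuleCat.of R (R ⧸ K0))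
      rw [ModuleCat.epi_iff_surjective]
      exact Submodule.mkQ_surjective K0
  | succ n =>
    rw [quasiIsoAt_iff_exactAt' _ _ (ChainComplex.exactAt_succ_single_obj _ _)]
    exact resComplex_exactAt_succ K0 n

/-- The free resolution of `R ⧸ K0` as a `ProjectiveResolution`. -/
noncomputable def resRes : ProjectiveResolution (ModuleCat.of R (R ⧸ K0)) where
  complex := resComplex K0
  projective := resComplex_projective K0
  π := resPi K0

end GenericResolution2

noncomputable section Criterion

variable {k : Type} [CommRing k] {R : Type} [Ring R] [Algebra k R]

/-- The total map onto the submodule itself. -/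
noncomputable def totalK (K0 : Submodule R R) : ((↥K0) →₀ R) →ₗ[R] ↥K0 :=
  Finsupp.linearCombination R _root_.id

lemma totalK_comp (K0 : Submodule R R) :
    Finsupp.linearCombination R (Subtype.val : ↥K0 → R) = K0.subtype ∘ₗ (totalK K0) := by
  apply Finsupp.lhom_ext
  intro u b
  simp [totalK]


variable (k : Type) [Field k] {R : Type} [Ring R] [Algebra k R]

theorem isZero_homology_iff (K0 : Submodule R R) (N : ModuleCat R) :
    IsZero (((resRes K0).complex.linearYonedaObj k N).homology 1) ↔
      ∀ f : K0 →ₗ[R] N, ∃ t : (R →ₗ[R] ↥N), ∀ (u : R) (hu : u ∈ K0), t u = f ⟨u, hu⟩ := by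
  rw [← HomologicalComplex.exactAt_iff_isZero_homology]
  rw [HomologicalComplex.exactAt_iff' _ 0 1 2 (by simp) (by simp)]
  rw [ShortComplex.moduleCat_exact_iff]
  have hd10 : (resComplex K0).d 1 0 = resD K0 0 := ChainComplex.of_d (fun n => (resAux K0 n).1) (resD K0) (0)
  have hd21 : (resComplex K0).d 2 1 = resD K0 1 := ChainComplex.of_d (fun n => (resAux K0 n).1) (resD K0) (1)
  have key : (∀ x₂ : (resComplex K0).X 1 ⟶ N, (resComplex K0).d 2 1 ≫ x₂ = 0 →
      ∃ x₁ : (resComplex K0).X 0 ⟶ N, (resComplex K0).d 1 0 ≫ x₁ = x₂) ↔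
      ∀ f : K0 →ₗ[R] N, ∃ t : (R →ₗ[R] ↥N), ∀ (u : R) (hu : u ∈ K0), t u = f ⟨u, hu⟩ := by
    constructor
    · intro H f
      set φ : (resComplex K0).X 1 ⟶ N := ModuleCat.ofHom (f.comp (totalK K0) : ((↥K0) →₀ R) →ₗ[R] ↥N) with hφd
      have hzero : (resComplex K0).d 2 1 ≫ φ = 0 := by
        rw [hd21]
        apply ModuleCat.hom_ext
        apply LinearMap.ext
        intro v
        have h1 : (resD K0 1).hom v ∈ LinearMap.range (resD K0 1).hom := LinearMap.mem_range_self _ v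
        rw [resD_range] at h1
        have h1' : (resD K0 1).hom v ∈ LinearMap.ker (Finsupp.linearCombination R
            (Subtype.val : ↥K0 → R)) := h1
        rw [totalK_comp] at h1'
        have hv' : totalK K0 ((resD K0 1).hom v) = 0 := by
          have h1'' : (K0.subtype ∘ₗ totalK K0) ((resD K0 1).hom v) = 0 := h1'
          exact Subtype.val_injective h1''
        show φ.hom ((resD K0 1).hom v) = 0
        rw [hφd]
        show f (totalK K0 ((resD K0 1).hom v)) = 0
        rw [hv']
        simp
      obtain ⟨ψ, hψ⟩ := H φ hzero
      refine ⟨ψ.hom, fun u hu => ?_⟩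
      have h1 : (resD K0 0).hom (Finsupp.single (⟨u, hu⟩ : ↥K0) (1 : R)) = u := by
        show Finsupp.linearCombination R (Subtype.val : ↥K0 → R) (Finsupp.single ⟨u, hu⟩ 1) = u
        simp
      have h2 : ψ.hom ((resD K0 0).hom (Finsupp.single (⟨u, hu⟩ : ↥K0) (1 : R))) =
          φ.hom (Finsupp.single (⟨u, hu⟩ : ↥K0) (1 : R)) := by
        have h2' := congrArg (fun (m : (resComplex K0).X 1 ⟶ N) =>
          m.hom (Finsupp.single (⟨u, hu⟩ : ↥K0) (1 : R))) hψ
        rw [hd10] at h2'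
        exact h2'
      rw [h1] at h2
      refine h2.trans ?_
      rw [hφd]
      show f (totalK K0 (Finsupp.single ⟨u, hu⟩ 1)) = f ⟨u, hu⟩
      congr 1
      show Finsupp.linearCombination R _root_.id (Finsupp.single (⟨u, hu⟩ : ↥K0) (1:R)) = _
      simp
    · intro H φ hφ
      rw [hd21] at hφ
      have hker : ∀ v : ((↥K0) →₀ R), totalK K0 v = 0 → φ.hom v = 0 := by
        intro v hv
        have hv' : v ∈ LinearMap.ker (Finsupp.linearCombination R (Subtype.val : ↥K0 → R)) := by
          rw [totalK_comp]
          simp only [LinearMap.mem_ker, LinearMap.coe_comp, Function.comp_apply, hv]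
          simp
        obtain ⟨w, hw⟩ : ∃ w, (resD K0 1).hom w = v := by
          have hv2 : v ∈ LinearMap.range (resD K0 1).hom := by
            rw [resD_range]
            exact hv'
          exact hv2
        calc φ.hom v = φ.hom ((resD K0 1).hom w) := by rw [hw]
        _ = (resD K0 1 ≫ φ).hom w := rfl
        _ = 0 := (congrArg (fun f : (resComplex K0).X 2 ⟶ N => f.hom w) hφ).trans rfl
      have hadd : ∀ u v : ↥K0, φ.hom (Finsupp.single (u + v) 1) =
          φ.hom (Finsupp.single u 1) + φ.hom (Finsupp.single v 1) := by
        intro u v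
        have h := hker (Finsupp.single (u + v) 1 - Finsupp.single u 1 - Finsupp.single v 1)
          (by simp [totalK])
        erw [map_sub, map_sub, sub_sub, sub_eq_zero] at h
        exact h
      have hsmul : ∀ (r : R) (u : ↥K0), φ.hom (Finsupp.single (r • u) 1) =
          r • φ.hom (Finsupp.single u 1) := by
        intro r u
        have h := hker (Finsupp.single (r • u) 1 - r • Finsupp.single u 1)
          (by simp [totalK])
        erw [map_sub, sub_eq_zero] at h
        erw [h, map_smul]
        rfl
      set f : K0 →ₗ[R] ↥N :=
        { toFun := fun u => φ.hom (Finsupp.single u 1)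
          map_add' := hadd
          map_smul' := hsmul } with hf
      obtain ⟨t, ht⟩ := H f
      refine ⟨(ModuleCat.ofHom t : ModuleCat.of R R ⟶ N), ?_⟩
      rw [hd10]
      apply ModuleCat.hom_ext
      apply Finsupp.lhom_ext
      intro u b
      rcases u with ⟨u, hu⟩
      show t ((resD K0 0).hom (Finsupp.single (⟨u, hu⟩ : ↥K0) b)) =
        φ.hom (Finsupp.single (⟨u, hu⟩ : ↥K0) b)
      have h1 : (resD K0 0).hom (Finsupp.single (⟨u, hu⟩ : ↥K0) b) = b • (⟨u, hu⟩ : ↥K0).val := by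
        show Finsupp.linearCombination R (Subtype.val : ↥K0 → R)
          (Finsupp.single (⟨u, hu⟩ : ↥K0) b) = b • (⟨u, hu⟩ : ↥K0).val
        simp
      rw [h1, map_smul, ht u hu]
      have h2 : Finsupp.single (⟨u, hu⟩ : ↥K0) b = b • Finsupp.single (⟨u, hu⟩ : ↥K0) (1 : R) := by
        simp
      erw [h2, map_smul]
      congr 1
  exact key

namespace LambdaAlg

variable {k : Type} [Field k] {q : k} {Λ : Type} [Ring Λ] [Algebra k Λ] (D : LambdaAlg k q Λ)


-- derived multiplication table
lemma xy : D.x * D.y = -(q • (D.y * D.x)) := by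
  have := D.hxy; linear_combination (norm := module) this
lemma xz : D.x * D.z = D.z * D.x := by have := D.hxz; linear_combination (norm := abel) this
lemma zy : D.z * D.y = D.z * D.x := by have := D.hzy; linear_combination (norm := abel) this

lemma yx_x : (D.y * D.x) * D.x = 0 := by rw [mul_assoc, D.hxx, mul_zero]
lemma yx_y : (D.y * D.x) * D.y = 0 := by
  rw [mul_assoc, D.xy, mul_neg, mul_smul_comm, ← mul_assoc, D.hyy, zero_mul, smul_zero, neg_zero]
lemma yx_z : (D.y * D.x) * D.z = 0 := by
  rw [mul_assoc, D.xz, ← mul_assoc, D.hyz, zero_mul]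
lemma zx_x : (D.z * D.x) * D.x = 0 := by rw [mul_assoc, D.hxx, mul_zero]
lemma zx_y : (D.z * D.x) * D.y = 0 := by
  rw [mul_assoc, D.xy, mul_neg, mul_smul_comm, ← mul_assoc, D.zy, mul_assoc, D.hxx, mul_zero,
    smul_zero, neg_zero]
lemma zx_z : (D.z * D.x) * D.z = 0 := by
  rw [mul_assoc, D.xz, ← mul_assoc, D.hzz, zero_mul]
lemma x_yx : D.x * (D.y * D.x) = 0 := by
  rw [← mul_assoc, D.xy, neg_mul, smul_mul_assoc, D.yx_x, smul_zero, neg_zero]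
lemma y_yx : D.y * (D.y * D.x) = 0 := by rw [← mul_assoc, D.hyy, zero_mul]
lemma z_yx : D.z * (D.y * D.x) = 0 := by
  rw [← mul_assoc, D.zy, mul_assoc, D.hxx, mul_zero]
lemma x_zx : D.x * (D.z * D.x) = 0 := by
  rw [← mul_assoc, D.xz, mul_assoc, D.hxx, mul_zero]
lemma y_zx : D.y * (D.z * D.x) = 0 := by rw [← mul_assoc, D.hyz, zero_mul]
lemma z_zx : D.z * (D.z * D.x) = 0 := by rw [← mul_assoc, D.hzz, zero_mul]
lemma yx_yx : (D.y * D.x) * (D.y * D.x) = 0 := by rw [← mul_assoc, yx_y, zero_mul]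
lemma yx_zx : (D.y * D.x) * (D.z * D.x) = 0 := by rw [← mul_assoc, yx_z, zero_mul]
lemma zx_yx : (D.z * D.x) * (D.y * D.x) = 0 := by rw [← mul_assoc, zx_y, zero_mul]
lemma zx_zx : (D.z * D.x) * (D.z * D.x) = 0 := by rw [← mul_assoc, zx_z, zero_mul]

/-- A linear combination of the basis monomials. -/
def lin (r : Fin 6 → k) : Λ :=
  r 0 • 1 + r 1 • D.x + r 2 • D.y + r 3 • D.z + r 4 • (D.y * D.x) + r 5 • (D.z * D.x)

lemma eq_lin (v : Λ) : v = D.lin (fun i => D.basis.repr v i) := by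
  have h := D.basis.sum_repr v
  rw [Fin.sum_univ_six] at h
  rw [D.hb0, D.hb1, D.hb2, D.hb3, D.hb4, D.hb5] at h
  exact h.symm

lemma indep {r : Fin 6 → k} (h : D.lin r = 0) : ∀ i, r i = 0 := by
  have e : ∑ i : Fin 6, r i • D.basis i = 0 := by
    rw [Fin.sum_univ_six, D.hb0, D.hb1, D.hb2, D.hb3, D.hb4, D.hb5]
    exact h
  exact Fintype.linearIndependent_iff.mp D.basis.linearIndependent r e

lemma indep6 {c0 c1 c2 c3 c4 c5 : k}
    (h : c0 • (1:Λ) + c1 • D.x + c2 • D.y + c3 • D.z + c4 • (D.y * D.x)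
      + c5 • (D.z * D.x) = 0) :
    c0 = 0 ∧ c1 = 0 ∧ c2 = 0 ∧ c3 = 0 ∧ c4 = 0 ∧ c5 = 0 := by
  have h' : D.lin ![c0, c1, c2, c3, c4, c5] = 0 := by rw [lin]; exact h
  have h0 := D.indep h'
  exact ⟨by simpa using h0 0, by simpa using h0 1, by simpa using h0 2, by simpa using h0 3,
    by simpa using h0 4, by simpa using h0 5⟩


section Expansions
variable (a b c : k)

attribute [local simp] mul_add mul_smul_comm smul_mul_assoc mul_one one_mul smul_smul

lemma x_mul (v : Λ) : D.x * v =
    D.basis.repr v 0 • D.x + (-(q * D.basis.repr v 2)) • (D.y * D.x)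
      + D.basis.repr v 3 • (D.z * D.x) := by
  conv_lhs => rw [D.eq_lin v]
  rw [lin]
  simp only [mul_add, mul_smul_comm, mul_one, D.hxx, D.xy, D.xz, D.x_yx, D.x_zx]
  module

lemma y_mul (v : Λ) : D.y * v =
    D.basis.repr v 0 • D.y + D.basis.repr v 1 • (D.y * D.x) := by
  conv_lhs => rw [D.eq_lin v]
  rw [lin]
  simp only [mul_add, mul_smul_comm, mul_one, D.hyy, D.hyz, D.y_yx, D.y_zx]
  module

lemma z_mul (v : Λ) : D.z * v =
    D.basis.repr v 0 • D.z + (D.basis.repr v 1 + D.basis.repr v 2) • (D.z * D.x) := by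
  conv_lhs => rw [D.eq_lin v]
  rw [lin]
  simp only [mul_add, mul_smul_comm, mul_one, D.hzz, D.zy, D.xz, D.z_yx, D.z_zx]
  module

lemma yx_mul (v : Λ) : (D.y * D.x) * v = D.basis.repr v 0 • (D.y * D.x) := by
  conv_lhs => rw [D.eq_lin v]
  rw [lin]
  simp only [mul_add, mul_smul_comm, mul_one, D.yx_x, D.yx_y, D.yx_z, D.yx_yx, D.yx_zx]
  module

lemma zx_mul (v : Λ) : (D.z * D.x) * v = D.basis.repr v 0 • (D.z * D.x) := by
  conv_lhs => rw [D.eq_lin v]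
  rw [lin]
  simp only [mul_add, mul_smul_comm, mul_one, D.zx_x, D.zx_y, D.zx_z, D.zx_yx, D.zx_zx]
  module

lemma mul_w (v : Λ) : v * D.w a b c =
    D.basis.repr v 0 • D.w a b c
      + (D.basis.repr v 2 * a - D.basis.repr v 1 * (q * b)) • (D.y * D.x)
      + (D.basis.repr v 1 * c + D.basis.repr v 3 * (a + b)) • (D.z * D.x) := by
  conv_lhs => rw [D.eq_lin v]
  rw [lin, w]
  simp only [mul_add, add_mul, mul_smul_comm, smul_mul_assoc, mul_one, one_mul,
    D.hxx, D.hyy, D.hzz, D.hyz, D.xy, D.xz, D.zy,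
    D.yx_x, D.yx_y, D.yx_z, D.zx_x, D.zx_y, D.zx_z]
  module

lemma mul_yx (v : Λ) : v * (D.y * D.x) = D.basis.repr v 0 • (D.y * D.x) := by
  conv_lhs => rw [D.eq_lin v]
  rw [lin]
  simp only [mul_add, add_mul, smul_mul_assoc, one_mul,
    D.x_yx, D.y_yx, D.z_yx, D.yx_yx, D.zx_yx]
  module

lemma mul_zx (v : Λ) : v * (D.z * D.x) = D.basis.repr v 0 • (D.z * D.x) := by
  conv_lhs => rw [D.eq_lin v]
  rw [lin]
  simp only [mul_add, add_mul, smul_mul_assoc, one_mul,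
    D.x_zx, D.y_zx, D.z_zx, D.yx_zx, D.zx_zx]
  module

lemma w_mul_y : D.w a b c * D.y = (-(a * q)) • (D.y * D.x) + c • (D.z * D.x) := by
  rw [w]
  simp only [add_mul, smul_mul_assoc, D.hyy, D.xy, D.zy]
  module

lemma w_mul_z : D.w a b c * D.z = a • (D.z * D.x) := by
  rw [w]
  simp only [add_mul, smul_mul_assoc, D.hzz, D.xz, D.hyz]
  module

end Expansions

section USt

variable (a b c : k)

lemma w_mem : D.w a b c ∈ D.U a b c :=
  Submodule.subset_span (by left; rfl)
lemma yx_mem : D.y * D.x ∈ D.U a b c :=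
  Submodule.subset_span (by right; left; rfl)
lemma zx_mem : D.z * D.x ∈ D.U a b c :=
  Submodule.subset_span (by right; right; rfl)

lemma mem_U_iff (v : Λ) : v ∈ D.U a b c ↔
    ∃ α ε ζ : k, v = α • D.w a b c + ε • (D.y * D.x) + ζ • (D.z * D.x) := by
  constructor
  · intro hv
    induction hv using Submodule.span_induction with
    | mem v hv =>
      rcases hv with h | h | h
      · exact ⟨1, 0, 0, by rw [h]; module⟩
      · exact ⟨0, 1, 0, by rw [h]; module⟩
      · exact ⟨0, 0, 1, by rw [h]; module⟩
    | zero => exact ⟨0, 0, 0, by module⟩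
    | add u v hu hv ihu ihv =>
      obtain ⟨α, ε, ζ, rfl⟩ := ihu
      obtain ⟨α', ε', ζ', rfl⟩ := ihv
      exact ⟨α + α', ε + ε', ζ + ζ', by module⟩
    | smul t v hv ih =>
      obtain ⟨α, ε, ζ, rfl⟩ := ih
      refine ⟨α * D.basis.repr t 0,
        α * (D.basis.repr t 2 * a - D.basis.repr t 1 * (q * b)) + ε * D.basis.repr t 0,
        α * (D.basis.repr t 1 * c + D.basis.repr t 3 * (a + b)) + ζ * D.basis.repr t 0, ?_⟩
      have h1 := D.mul_w a b c t
      have h2 := D.mul_yx t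
      have h3 := D.mul_zx t
      calc t • (α • D.w a b c + ε • (D.y * D.x) + ζ • (D.z * D.x))
          = α • (t * D.w a b c) + ε • (t * (D.y * D.x)) + ζ • (t * (D.z * D.x)) := by
            rw [smul_eq_mul]
            simp only [mul_add, mul_smul_comm]
      _ = _ := by rw [h1, h2, h3]; module
  · rintro ⟨α, ε, ζ, rfl⟩
    exact Submodule.add_mem _
      (Submodule.add_mem _
        (Submodule.smul_of_tower_mem _ _ (D.w_mem a b c))
        (Submodule.smul_of_tower_mem _ _ (D.yx_mem a b c)))
      (Submodule.smul_of_tower_mem _ _ (D.zx_mem a b c))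

/-- Independence of `w, yx, zx` when `(a,b,c) ≠ 0`. -/
lemma w_indep (habc : ¬(a = 0 ∧ b = 0 ∧ c = 0)) {α ε ζ : k}
    (h : α • D.w a b c + ε • (D.y * D.x) + ζ • (D.z * D.x) = 0) : α = 0 ∧ ε = 0 ∧ ζ = 0 := by
  have hl : D.lin ![0, α * a, α * b, α * c, ε, ζ] = 0 := by
    rw [lin, w] at *
    simp only [Matrix.cons_val_zero, Matrix.cons_val_one, Matrix.head_cons] at *
    calc (0:k) • (1:Λ) + (α * a) • D.x + (α * b) • D.y + (α * c) • D.z + ε • (D.y * D.x)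
          + ζ • (D.z * D.x)
        = α • (a • D.x + b • D.y + c • D.z) + ε • (D.y * D.x) + ζ • (D.z * D.x) := by module
    _ = 0 := h
  have h0 := D.indep hl
  have ha : α * a = 0 := by simpa using h0 1
  have hb : α * b = 0 := by simpa using h0 2
  have hc : α * c = 0 := by simpa using h0 3
  have hα : α = 0 := by
    by_contra hα
    exact habc ⟨(mul_eq_zero.mp ha).resolve_left hα, (mul_eq_zero.mp hb).resolve_left hα,
      (mul_eq_zero.mp hc).resolve_left hα⟩
  refine ⟨hα, by simpa using h0 4, by simpa using h0 5⟩

end USt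

section Good

variable (a b c : k)

lemma x_mul_w : D.x * D.w a b c = (-(q * b)) • (D.y * D.x) + c • (D.z * D.x) := by
  rw [w]
  simp only [mul_add, mul_smul_comm, D.hxx, D.xy, D.xz]
  module

lemma y_mul_w : D.y * D.w a b c = a • (D.y * D.x) := by
  rw [w]
  simp only [mul_add, mul_smul_comm, D.hyy, D.hyz]
  module

lemma z_mul_w : D.z * D.w a b c = (a + b) • (D.z * D.x) := by
  rw [w]
  simp only [mul_add, mul_smul_comm, D.hzz, D.zy, D.xz]
  module

theorem good_case (hq : q ≠ 0) (ha : a ≠ 0) (hab : a + b ≠ 0)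
    (F : ↥(D.U a b c) →ₗ[Λ] Λ) :
    ∃ t : Λ, ∀ u (hu : u ∈ D.U a b c), u * t = F ⟨u, hu⟩ := by
  set u₀ := F ⟨D.w a b c, D.w_mem a b c⟩ with hu₀
  set v₀ := F ⟨D.y * D.x, D.yx_mem a b c⟩ with hv₀
  set s₀ := F ⟨D.z * D.x, D.zx_mem a b c⟩ with hs₀
  have hF : ∀ (t u : Λ) (hu : u ∈ D.U a b c),
      F ⟨t * u, Submodule.smul_mem _ t hu⟩ = t * F ⟨u, hu⟩ := by
    intro t u hu
    have h := F.map_smul t ⟨u, hu⟩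
    rwa [show t • (⟨u, hu⟩ : D.U a b c) = ⟨t * u, Submodule.smul_mem _ t hu⟩ from rfl,
      smul_eq_mul] at h
  have hFk : ∀ (α : k) (u : Λ) (hu : u ∈ D.U a b c),
      F ⟨α • u, Submodule.smul_of_tower_mem _ α hu⟩ = α • F ⟨u, hu⟩ := by
    intro α u hu
    have h := F.map_smul_of_tower α ⟨u, hu⟩
    rwa [show α • (⟨u, hu⟩ : D.U a b c) = ⟨α • u, Submodule.smul_of_tower_mem _ α hu⟩ from
      rfl] at h
  have h1 : D.y * u₀ = a • v₀ := by
    rw [hu₀, ← hF]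
    rw [show (⟨D.y * D.w a b c, _⟩ : D.U a b c)
      = ⟨a • (D.y * D.x), Submodule.smul_of_tower_mem _ a (D.yx_mem a b c)⟩ from
      Subtype.ext (D.y_mul_w a b c)]
    rw [hFk]
  have h2 : D.z * u₀ = (a + b) • s₀ := by
    rw [hu₀, ← hF]
    rw [show (⟨D.z * D.w a b c, _⟩ : D.U a b c)
      = ⟨(a + b) • (D.z * D.x), Submodule.smul_of_tower_mem _ (a + b) (D.zx_mem a b c)⟩ from
      Subtype.ext (D.z_mul_w a b c)]
    rw [hFk]
  have h3 : D.x * u₀ = (-(q * b)) • v₀ + c • s₀ := by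
    rw [hu₀, ← hF]
    rw [show (⟨D.x * D.w a b c, _⟩ : D.U a b c)
      = (-(q * b)) • ⟨D.y * D.x, D.yx_mem a b c⟩ + c • ⟨D.z * D.x, D.zx_mem a b c⟩ from
      Subtype.ext (by
        show D.x * D.w a b c = _
        rw [D.x_mul_w a b c]
        rfl)]
    rw [map_add, F.map_smul_of_tower, F.map_smul_of_tower]
  -- the coordinate constraints
  have hveq : v₀ = a⁻¹ • (D.basis.repr u₀ 0 • D.y + D.basis.repr u₀ 1 • (D.y * D.x)) := by
    rw [← D.y_mul u₀, h1, smul_smul, inv_mul_cancel₀ ha, one_smul]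
  have hseq : s₀ = (a + b)⁻¹ • (D.basis.repr u₀ 0 • D.z
      + (D.basis.repr u₀ 1 + D.basis.repr u₀ 2) • (D.z * D.x)) := by
    rw [← D.z_mul u₀, h2, smul_smul, inv_mul_cancel₀ hab, one_smul]
  have hsum : (0:k) • (1:Λ) + D.basis.repr u₀ 0 • D.x
      + (q * b * a⁻¹ * D.basis.repr u₀ 0) • D.y
      + (-(c * (a + b)⁻¹ * D.basis.repr u₀ 0)) • D.z
      + (-(q * D.basis.repr u₀ 2) + q * b * a⁻¹ * D.basis.repr u₀ 1) • (D.y * D.x)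
      + (D.basis.repr u₀ 3 - c * (a + b)⁻¹ * (D.basis.repr u₀ 1 + D.basis.repr u₀ 2))
        • (D.z * D.x) = 0 := by
    have h3' := h3
    rw [D.x_mul u₀, hveq, hseq] at h3'
    linear_combination (norm := module) h3'
  obtain ⟨-, hr0, -, -, hc4, hc5⟩ := D.indep6 hsum
  have hr2' : D.basis.repr u₀ 2 = b * a⁻¹ * D.basis.repr u₀ 1 := by
    have h4 : q * D.basis.repr u₀ 2 = q * (b * a⁻¹ * D.basis.repr u₀ 1) := by
      linear_combination -hc4
    exact mul_left_cancel₀ hq h4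
  have hr3' : D.basis.repr u₀ 3 = c * a⁻¹ * D.basis.repr u₀ 1 := by
    have h5 : D.basis.repr u₀ 3
        = c * (a + b)⁻¹ * (D.basis.repr u₀ 1 + D.basis.repr u₀ 2) := by
      linear_combination hc5
    rw [h5, hr2']
    field_simp
  -- the element t
  set γ : k := -(D.basis.repr u₀ 4 * (q * a)⁻¹) with hγ
  set δ : k := (D.basis.repr u₀ 5 + c * (D.basis.repr u₀ 4 * (q * a)⁻¹)) * a⁻¹ with hδ
  set t : Λ := (D.basis.repr u₀ 1 * a⁻¹) • 1 + γ • D.y + δ • D.z with ht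
  have hu₀lin : u₀ = D.lin (fun i => D.basis.repr u₀ i) := D.eq_lin u₀
  have hA : D.w a b c * t = u₀ := by
    rw [ht]
    rw [mul_add, mul_add, mul_smul_comm, mul_smul_comm, mul_smul_comm, mul_one,
      D.w_mul_y a b c, D.w_mul_z a b c]
    conv_rhs => rw [hu₀lin]
    rw [lin, w, hr0, hr2', hr3', hγ, hδ]
    match_scalars
    all_goals (try field_simp)
    all_goals (try ring)
    all_goals (try tauto)
  have hB : (D.y * D.x) * t = v₀ := by
    rw [ht]
    rw [mul_add, mul_add, mul_smul_comm, mul_smul_comm, mul_smul_comm, mul_one,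
      D.yx_y, D.yx_z]
    rw [hveq, hr0]
    match_scalars
    all_goals (try field_simp)
    all_goals (try ring)
    all_goals (try tauto)
  have hC : (D.z * D.x) * t = s₀ := by
    rw [ht]
    rw [mul_add, mul_add, mul_smul_comm, mul_smul_comm, mul_smul_comm, mul_one,
      D.zx_y, D.zx_z]
    rw [hseq, hr0, hr2']
    match_scalars
    all_goals (try field_simp)
    all_goals (try ring)
    all_goals (try tauto)
  refine ⟨t, ?_⟩
  intro u hu
  obtain ⟨α, ε, ζ, huval⟩ := (D.mem_U_iff a b c u).mp hu
  subst huval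
  have hsplit : (⟨α • D.w a b c + ε • (D.y * D.x) + ζ • (D.z * D.x), hu⟩ : D.U a b c)
      = α • ⟨D.w a b c, D.w_mem a b c⟩ + ε • ⟨D.y * D.x, D.yx_mem a b c⟩
        + ζ • ⟨D.z * D.x, D.zx_mem a b c⟩ := by
    apply Subtype.ext
    rfl
  rw [hsplit, map_add, map_add, F.map_smul_of_tower, F.map_smul_of_tower, F.map_smul_of_tower]
  rw [add_mul, add_mul, smul_mul_assoc, smul_mul_assoc, smul_mul_assoc, hA, hB, hC]

end Good

section Bad

variable (a b c : k)

/-- The three generators of `U` as elements of the submodule. -/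
noncomputable def gen : Fin 3 → ↥(D.U a b c) :=
  ![⟨D.w a b c, D.w_mem a b c⟩, ⟨D.y * D.x, D.yx_mem a b c⟩, ⟨D.z * D.x, D.zx_mem a b c⟩]

lemma gen_indep (habc : ¬(a = 0 ∧ b = 0 ∧ c = 0)) :
    LinearIndependent k (D.gen a b c) := by
  rw [Fintype.linearIndependent_iff]
  intro g hg
  have hg' : g 0 • D.w a b c + g 1 • (D.y * D.x) + g 2 • (D.z * D.x) = 0 := by
    have := congrArg (Subtype.val) hg
    rw [Fin.sum_univ_three] at this
    simpa [gen] using this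
  obtain ⟨h0, h1, h2⟩ := D.w_indep a b c habc hg'
  intro i
  fin_cases i <;> assumption

lemma gen_span : ⊤ ≤ Submodule.span k (Set.range (D.gen a b c)) := by
  intro u _
  obtain ⟨α, ε, ζ, hu⟩ := (D.mem_U_iff a b c u.1).mp u.2
  have : u = α • D.gen a b c 0 + ε • D.gen a b c 1 + ζ • D.gen a b c 2 := by
    apply Subtype.ext
    rw [hu]
    rfl
  rw [this]
  refine Submodule.add_mem _ (Submodule.add_mem _ ?_ ?_) ?_ <;>
    exact Submodule.smul_mem _ _ (Submodule.subset_span ⟨_, rfl⟩)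

/-- A `k`-basis of `U(a,b,c)`. -/
noncomputable def basisU (habc : ¬(a = 0 ∧ b = 0 ∧ c = 0)) : Module.Basis (Fin 3) k ↥(D.U a b c) :=
  Module.Basis.mk (D.gen_indep a b c habc) (D.gen_span a b c)

/-- Constructing a `Λ`-linear map `U(a,b,c) → Λ` from values on the generators. -/
theorem exists_hom (habc : ¬(a = 0 ∧ b = 0 ∧ c = 0)) (u₀ v₀ s₀ : Λ)
    (hxu : D.x * u₀ = (-(q * b)) • v₀ + c • s₀)
    (hyu : D.y * u₀ = a • v₀)
    (hzu : D.z * u₀ = (a + b) • s₀)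
    (hyxu : (D.y * D.x) * u₀ = 0) (hzxu : (D.z * D.x) * u₀ = 0)
    (hxv : D.x * v₀ = 0) (hyv : D.y * v₀ = 0) (hzv : D.z * v₀ = 0)
    (hyxv : (D.y * D.x) * v₀ = 0) (hzxv : (D.z * D.x) * v₀ = 0)
    (hxs : D.x * s₀ = 0) (hys : D.y * s₀ = 0) (hzs : D.z * s₀ = 0)
    (hyxs : (D.y * D.x) * s₀ = 0) (hzxs : (D.z * D.x) * s₀ = 0) :
    ∃ F : ↥(D.U a b c) →ₗ[Λ] Λ, F ⟨D.w a b c, D.w_mem a b c⟩ = u₀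
      ∧ F ⟨D.y * D.x, D.yx_mem a b c⟩ = v₀ ∧ F ⟨D.z * D.x, D.zx_mem a b c⟩ = s₀ := by
  set g : ↥(D.U a b c) →ₗ[k] Λ := (D.basisU a b c habc).constr k ![u₀, v₀, s₀] with hgdef
  have hg0 : g ⟨D.w a b c, D.w_mem a b c⟩ = u₀ := by
    have := (D.basisU a b c habc).constr_basis k ![u₀, v₀, s₀] 0
    rwa [basisU, Module.Basis.mk_apply] at this
  have hg1 : g ⟨D.y * D.x, D.yx_mem a b c⟩ = v₀ := by
    have := (D.basisU a b c habc).constr_basis k ![u₀, v₀, s₀] 1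
    rwa [basisU, Module.Basis.mk_apply] at this
  have hg2 : g ⟨D.z * D.x, D.zx_mem a b c⟩ = s₀ := by
    have := (D.basisU a b c habc).constr_basis k ![u₀, v₀, s₀] 2
    rwa [basisU, Module.Basis.mk_apply] at this
  have hval : ∀ u : ↥(D.U a b c), ∀ α ε ζ : k,
      (u : Λ) = α • D.w a b c + ε • (D.y * D.x) + ζ • (D.z * D.x) →
      g u = α • u₀ + ε • v₀ + ζ • s₀ := by
    intro u α ε ζ hu
    have hu' : u = α • (⟨D.w a b c, D.w_mem a b c⟩ : ↥(D.U a b c))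
        + ε • ⟨D.y * D.x, D.yx_mem a b c⟩ + ζ • ⟨D.z * D.x, D.zx_mem a b c⟩ :=
      Subtype.ext (by rw [hu]; rfl)
    rw [hu', map_add, map_add, map_smul, map_smul, map_smul, hg0, hg1, hg2]
  have hsm : ∀ (t : Λ) (u : ↥(D.U a b c)), g (t • u) = t • g u := by
    intro t u
    obtain ⟨α, ε, ζ, hu⟩ := (D.mem_U_iff a b c u.1).mp u.2
    have hgu : g u = α • u₀ + ε • v₀ + ζ • s₀ := hval u α ε ζ hu
    -- value of t • u
    have htu : ((t • u : ↥(D.U a b c)) : Λ) =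
        (α * D.basis.repr t 0) • D.w a b c
          + (α * (D.basis.repr t 2 * a - D.basis.repr t 1 * (q * b)) + ε * D.basis.repr t 0)
            • (D.y * D.x)
          + (α * (D.basis.repr t 1 * c + D.basis.repr t 3 * (a + b)) + ζ * D.basis.repr t 0)
            • (D.z * D.x) := by
      show t * (u : Λ) = _
      rw [hu]
      rw [mul_add, mul_add, mul_smul_comm, mul_smul_comm, mul_smul_comm,
        D.mul_w a b c t, D.mul_yx t, D.mul_zx t]
      module
    have hgtu : g (t • u) =
        (α * D.basis.repr t 0) • u₀
          + (α * (D.basis.repr t 2 * a - D.basis.repr t 1 * (q * b)) + ε * D.basis.repr t 0) • v₀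
          + (α * (D.basis.repr t 1 * c + D.basis.repr t 3 * (a + b)) + ζ * D.basis.repr t 0)
            • s₀ := hval _ _ _ _ htu
    show g (t • u) = t * g u
    rw [hgtu, hgu]
    conv_rhs => rw [D.eq_lin t]
    rw [lin]
    simp only [mul_add, add_mul, smul_mul_assoc, one_mul, mul_smul_comm,
      hxu, hyu, hzu, hyxu, hzxu, hxv, hyv, hzv, hyxv, hzxv, hxs, hys, hzs, hyxs, hzxs]
    module
  exact ⟨{ toFun := g, map_add' := g.map_add, map_smul' := hsm }, hg0, hg1, hg2⟩

theorem bad_case (habc : ¬(a = 0 ∧ b = 0 ∧ c = 0)) (h : a = 0 ∨ a + b = 0) :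
    ∃ F : ↥(D.U a b c) →ₗ[Λ] Λ,
      ¬ ∃ t : Λ, ∀ u (hu : u ∈ D.U a b c), u * t = F ⟨u, hu⟩ := by
  rcases h with ha | hab
  · obtain ⟨F, -, hF1, hF2⟩ := D.exists_hom a b c habc ((-(q * b)) • D.z) (D.z * D.x) 0
      (by rw [mul_smul_comm, D.xz]; module)
      (by rw [mul_smul_comm, D.hyz, ha]; module)
      (by rw [mul_smul_comm, D.hzz]; module)
      (by rw [mul_smul_comm, D.yx_z]; module)
      (by rw [mul_smul_comm, D.zx_z]; module)
      D.x_zx D.y_zx D.z_zx D.yx_zx D.zx_zx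
      (by simp) (by simp) (by simp) (by simp) (by simp)
    refine ⟨F, ?_⟩
    rintro ⟨t, ht⟩
    have h1 := ht (D.y * D.x) (D.yx_mem a b c)
    rw [D.yx_mul t, hF1] at h1
    have h2 : (0:k) • D.w a b c + (D.basis.repr t 0) • (D.y * D.x)
        + (-1 : k) • (D.z * D.x) = 0 := by
      linear_combination (norm := module) h1
    have := (D.w_indep a b c habc h2).2.2
    simp at this
  · obtain ⟨F, -, hF1, hF2⟩ := D.exists_hom a b c habc (c • D.z) 0 (D.z * D.x)
      (by rw [mul_smul_comm, D.xz]; module)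
      (by rw [mul_smul_comm, D.hyz]; module)
      (by rw [mul_smul_comm, D.hzz, hab]; module)
      (by rw [mul_smul_comm, D.yx_z]; module)
      (by rw [mul_smul_comm, D.zx_z]; module)
      (by simp) (by simp) (by simp) (by simp) (by simp)
      D.x_zx D.y_zx D.z_zx D.yx_zx D.zx_zx
    refine ⟨F, ?_⟩
    rintro ⟨t, ht⟩
    have h1 := ht (D.y * D.x) (D.yx_mem a b c)
    rw [D.yx_mul t, hF1] at h1
    have h2 := ht (D.z * D.x) (D.zx_mem a b c)
    rw [D.zx_mul t, hF2] at h2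
    have e1 : (0:k) • D.w a b c + (D.basis.repr t 0) • (D.y * D.x)
        + (0 : k) • (D.z * D.x) = 0 := by
      linear_combination (norm := module) h1
    have e2 : (0:k) • D.w a b c + (0:k) • (D.y * D.x)
        + (D.basis.repr t 0 - 1) • (D.z * D.x) = 0 := by
      linear_combination (norm := module) h2
    have k1 := (D.w_indep a b c habc e1).2.1
    have k2 := (D.w_indep a b c habc e2).2.2
    rw [k1] at k2
    simp at k2

end Bad

end LambdaAlg

/-- A module is indecomposable if it is nonzero and is not the direct sum of two
nonzero submodules. -/
def IsIndecomposable (R : Type) [Ring R] (M : Type) [AddCommGroup M] [Module R M] :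
    Prop :=
  Nontrivial M ∧
    ∀ N₁ N₂ : Submodule R M, N₁ ⊓ N₂ = ⊥ → N₁ ⊔ N₂ = ⊤ → N₁ = ⊥ ∨ N₂ = ⊥

/-- A module is torsionless if it admits an injective linear map into a finite free
module. -/
def IsTorsionless (R : Type) [Ring R] (M : Type) [AddCommGroup M] [Module R M] : Prop :=
  ∃ (n : ℕ) (f : M →ₗ[R] (Fin n → R)), Function.Injective f

/-- The canonical evaluation map `M → M** = Hom_{Λᵒᵖ}(Hom_Λ(M, Λ), Λ)`,
sending `m` to `f ↦ f m`. -/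
def evalMap (Λ : Type) [Ring Λ] (M : Type) [AddCommGroup M] [Module Λ M] :
    M → ((M →ₗ[Λ] Λ) →ₗ[Λᵐᵒᵖ] Λ) := fun m =>
  { toFun := fun f => f m
    map_add' := fun _ _ => rfl
    map_smul' := fun _ _ => rfl }

/-- The transformation `ω′(a,b,c) = (a, q⁻¹b, −((a+q⁻¹b)/a)·c)` on triples. -/
def omegaPrime {k : Type} [Field k] (q : k) (t : k × k × k) : k × k × k :=
  (t.1, q⁻¹ * t.2.1, -((t.1 + q⁻¹ * t.2.1) / t.1) * t.2.2)

/-- `Ext¹_Λ(M(a,b,c), Λ) = 0` if and only if `a ≠ 0` and `a + b ≠ 0`. -/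
theorem statement9 (k : Type) [Field k] (q : k) (hq : q ≠ 0)
    (Λ : Type) [Ring Λ] [Algebra k Λ] (D : LambdaAlg k q Λ)
    (a b c : k) (h : (a, b, c) ≠ (0, 0, 0)) :
    IsZero (((Ext k (ModuleCat Λ) 1).obj (op (ModuleCat.of Λ (D.M a b c)))).obj
        (ModuleCat.of Λ Λ))
    ↔ a ≠ 0 ∧ a + b ≠ 0 := by
  have habc : ¬(a = 0 ∧ b = 0 ∧ c = 0) := by
    rintro ⟨h1, h2, h3⟩
    exact h (by rw [h1, h2, h3])
  have e := (resRes (D.U a b c)).isoExt (R := k) 1 (ModuleCat.of Λ Λ)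
  have h1 : IsZero (((Ext k (ModuleCat Λ) 1).obj (op (ModuleCat.of Λ (D.M a b c)))).obj
      (ModuleCat.of Λ Λ)) ↔
      IsZero (((resRes (D.U a b c)).complex.linearYonedaObj k (ModuleCat.of Λ Λ)).homology 1) :=
    e.isZero_iff
  rw [h1, isZero_homology_iff k (D.U a b c) (ModuleCat.of Λ Λ)]
  constructor
  · intro H
    by_contra hcon
    have hbad : a = 0 ∨ a + b = 0 := by
      by_cases ha : a = 0
      · exact Or.inl ha
      · by_cases hab : a + b = 0
        · exact Or.inr hab
        · exact absurd ⟨ha, hab⟩ hcon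
    obtain ⟨F, hF⟩ := D.bad_case a b c habc hbad
    obtain ⟨T, hT⟩ := H F
    refine hF ⟨T 1, fun u hu => ?_⟩
    have h3 : T u = u • T 1 := by
      have h2 : T (u • (1 : Λ)) = u • T 1 := T.map_smul u 1
      rw [← h2]
      congr 1
      rw [smul_eq_mul, mul_one]
    have h4 := hT u hu
    rw [h3] at h4
    exact h4
  · rintro ⟨ha, hab⟩ F
    obtain ⟨t, ht⟩ := D.good_case a b c hq ha hab F
    refine ⟨LinearMap.toSpanSingleton Λ Λ t, ?_⟩
    intro u hu
    show u • t = F ⟨u, hu⟩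
    rw [smul_eq_mul]
    exact ht u hu
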